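/- For n, j ≥ 0, the degenerate r-Whitney numbers of the second kind satisfy W^{(r)}_{m,λ}(n,j) = Σ_{k=j}^n Σ_{l=j}^k C(n,k) C(k,l) (r-1)_{n-k,λ} (1)_{k-l,λ} m^{l-j} S_{2,λ/m}(l,j). -/

import Mathlib

open Finset

/-- Degenerate falling factorial `(x)_{n,λ} = x(x-λ)⋯(x-(n-1)λ)`. -/
noncomputable def dfall (lam x : ℝ) (n : ℕ) : ℝ := ∏ i ∈ Finset.range n, (x - i * lam)

/-- Ordinary falling factorial `(x)_n = x(x-1)⋯(x-n+1)`. -/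
noncomputable def ffall (x : ℝ) (n : ℕ) : ℝ := ∏ i ∈ Finset.range n, (x - i)


lemma dfall_succ (lam x : ℝ) (n : ℕ) :
    dfall lam x (n+1) = dfall lam x n * (x - n * lam) := Finset.prod_range_succ _ _

lemma ffall_nat_eq_zero {j k : ℕ} (h : j < k) : ffall (j : ℝ) k = 0 := by
  apply Finset.prod_eq_zero (Finset.mem_range.2 h); simp

lemma ffall_nat_self_ne_zero (k : ℕ) : ffall (k : ℝ) k ≠ 0 := by
  rw [ffall, Finset.prod_ne_zero_iff]
  intro i hi
  have : (i : ℝ) < k := by exact_mod_cast Finset.mem_range.mp hi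
  linarith

lemma coeff_unique (N : ℕ) (c : ℕ → ℝ)
    (h : ∀ x : ℝ, ∑ k ∈ range (N+1), c k * ffall x k = 0) :
    ∀ k, k ≤ N → c k = 0 := by
  intro k
  induction k using Nat.strong_induction_on with
  | _ k ih =>
    intro hk
    have h1 := h (k : ℝ)
    have h2 : ∀ i ∈ range (N+1), c i * ffall (k:ℝ) i
        = if i = k then c k * ffall (k:ℝ) k else 0 := by
      intro i _
      by_cases hik : i = k
      · simp [hik]
      · rw [if_neg hik]
        rcases Nat.lt_or_ge i k with h' | h'
        · rw [ih i h' (le_trans (le_of_lt h') hk), zero_mul]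
        · rw [ffall_nat_eq_zero (lt_of_le_of_ne h' (Ne.symm hik)), mul_zero]
    rw [Finset.sum_congr rfl h2, Finset.sum_ite_eq' (range (N+1)) k,
      if_pos (Finset.mem_range.2 (Nat.lt_succ_of_le hk))] at h1
    exact (mul_eq_zero.mp h1).resolve_right (ffall_nat_self_ne_zero k)

lemma dfall_add (lam a b : ℝ) (n : ℕ) :
    dfall lam (a + b) n =
      ∑ k ∈ range (n+1), (n.choose k : ℝ) * dfall lam a k * dfall lam b (n - k) := by
  induction n with
  | zero => simp [dfall]
  | succ n ih =>
    rw [dfall_succ, ih, Finset.sum_mul]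
    have key : ∀ k ∈ range (n+1),
        (n.choose k : ℝ) * dfall lam a k * dfall lam b (n-k) * (a + b - n*lam)
        = (n.choose k : ℝ) * (dfall lam a (k+1) * dfall lam b (n-k))
          + (n.choose k : ℝ) * (dfall lam a k * dfall lam b ((n-k)+1)) := by
      intro k hk
      have hk' : k ≤ n := Nat.lt_succ_iff.mp (Finset.mem_range.mp hk)
      rw [dfall_succ, dfall_succ]
      have hcast : ((n - k : ℕ) : ℝ) = (n:ℝ) - (k:ℝ) := by
        rw [Nat.cast_sub hk']
      have hab : (a + b - n*lam) = (a - k*lam) + (b - ((n-k:ℕ):ℝ)*lam) := by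
        rw [hcast]; ring
      rw [hab]; ring
    rw [Finset.sum_congr rfl key, Finset.sum_add_distrib]
    -- target: = ∑ k ∈ range (n+2), C(n+1,k) * a_k * b_{n+1-k}
    have target : ∑ k ∈ range (n+2), ((n+1).choose k : ℝ) * dfall lam a k * dfall lam b (n+1-k)
        = (∑ k ∈ range (n+1), (n.choose k : ℝ) * (dfall lam a (k+1) * dfall lam b (n-k)))
          + ∑ k ∈ range (n+1), (n.choose k : ℝ) * (dfall lam a k * dfall lam b ((n-k)+1)) := by
      rw [Finset.sum_range_succ' (fun k => ((n+1).choose k : ℝ) * dfall lam a k * dfall lam b (n+1-k)) (n+1)]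
      have e1 : ∀ k ∈ range (n+1),
          ((n+1).choose (k+1) : ℝ) * dfall lam a (k+1) * dfall lam b (n+1-(k+1))
          = (n.choose k : ℝ) * (dfall lam a (k+1) * dfall lam b (n-k))
            + (n.choose (k+1) : ℝ) * (dfall lam a (k+1) * dfall lam b (n-k)) := by
        intro k hk
        have : n + 1 - (k+1) = n - k := by omega
        rw [this, Nat.choose_succ_succ, Nat.cast_add]; ring
      rw [Finset.sum_congr rfl e1, Finset.sum_add_distrib]
      have e2 : ∑ k ∈ range (n+1), (n.choose (k+1) : ℝ) * (dfall lam a (k+1) * dfall lam b (n-k))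
            + ((n+1).choose 0 : ℝ) * dfall lam a 0 * dfall lam b (n+1-0)
          = ∑ k ∈ range (n+1), (n.choose k : ℝ) * (dfall lam a k * dfall lam b ((n-k)+1)) := by
        have e3 : ∑ k ∈ range (n+2), (n.choose k : ℝ) * (dfall lam a k * dfall lam b (n+1-k))
            = ∑ k ∈ range (n+1), (n.choose (k+1) : ℝ) * (dfall lam a (k+1) * dfall lam b (n+1-(k+1)))
              + (n.choose 0 : ℝ) * (dfall lam a 0 * dfall lam b (n+1-0)) :=
          Finset.sum_range_succ' _ (n+1)
        have e4 : ∑ k ∈ range (n+2), (n.choose k : ℝ) * (dfall lam a k * dfall lam b (n+1-k))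
            = ∑ k ∈ range (n+1), (n.choose k : ℝ) * (dfall lam a k * dfall lam b (n+1-k)) := by
          rw [Finset.sum_range_succ]
          simp [Nat.choose_eq_zero_of_lt (Nat.lt_succ_self n)]
        have e5 : ∀ k ∈ range (n+1), (n.choose k : ℝ) * (dfall lam a k * dfall lam b (n+1-k))
            = (n.choose k : ℝ) * (dfall lam a k * dfall lam b ((n-k)+1)) := by
          intro k hk
          have hk' : k ≤ n := Nat.lt_succ_iff.mp (Finset.mem_range.mp hk)
          have : n + 1 - k = (n - k) + 1 := by omega
          rw [this]
        have e6 : ∀ k ∈ range (n+1),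
            (n.choose (k+1) : ℝ) * (dfall lam a (k+1) * dfall lam b (n+1-(k+1)))
            = (n.choose (k+1) : ℝ) * (dfall lam a (k+1) * dfall lam b (n-k)) := by
          intro k hk
          have : n + 1 - (k+1) = n - k := by omega
          rw [this]
        calc ∑ k ∈ range (n+1), (n.choose (k+1) : ℝ) * (dfall lam a (k+1) * dfall lam b (n-k))
              + ((n+1).choose 0 : ℝ) * dfall lam a 0 * dfall lam b (n+1-0)
            = ∑ k ∈ range (n+1), (n.choose (k+1) : ℝ) * (dfall lam a (k+1) * dfall lam b (n+1-(k+1)))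
              + (n.choose 0 : ℝ) * (dfall lam a 0 * dfall lam b (n+1-0)) := by
              rw [← Finset.sum_congr rfl e6]; simp
          _ = ∑ k ∈ range (n+2), (n.choose k : ℝ) * (dfall lam a k * dfall lam b (n+1-k)) := e3.symm
          _ = ∑ k ∈ range (n+1), (n.choose k : ℝ) * (dfall lam a k * dfall lam b ((n-k)+1)) := by
              rw [e4, Finset.sum_congr rfl e5]
      linarith [e2]
    rw [target]


lemma dfall_scale (lam x : ℝ) (m : ℕ) (hm : 0 < m) (l : ℕ) :
    dfall lam ((m:ℝ) * x) l = (m:ℝ)^l * dfall (lam/m) x l := by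
  have hm' : (m:ℝ) ≠ 0 := Nat.cast_ne_zero.2 hm.ne'
  unfold dfall
  calc ∏ i ∈ range l, ((m:ℝ) * x - ↑i * lam)
      = ∏ i ∈ range l, ((m:ℝ) * (x - ↑i * (lam/↑m))) := by
        apply Finset.prod_congr rfl; intro i _; field_simp
    _ = (∏ _i ∈ range l, (m:ℝ)) * ∏ i ∈ range l, (x - ↑i * (lam/↑m)) :=
        Finset.prod_mul_distrib
    _ = (m:ℝ)^l * ∏ i ∈ range l, (x - ↑i * (lam/↑m)) := by
        rw [Finset.prod_const, Finset.card_range]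

lemma tri_swap (n : ℕ) (f : ℕ → ℕ → ℝ) :
    ∑ k ∈ range (n+1), ∑ l ∈ range (k+1), f k l
      = ∑ l ∈ range (n+1), ∑ k ∈ Finset.Icc l n, f k l := by
  have h1 : ∀ k ∈ range (n+1),
      ∑ l ∈ range (k+1), f k l = ∑ l ∈ range (n+1), if l ≤ k then f k l else 0 := by
    intro k hk
    rw [Finset.sum_ite, Finset.sum_const_zero, add_zero]
    apply Finset.sum_congr _ (fun _ _ => rfl)
    ext l
    simp only [Finset.mem_filter, Finset.mem_range]
    have := Finset.mem_range.mp hk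
    omega
  have h2 : ∀ l ∈ range (n+1),
      (∑ k ∈ range (n+1), if l ≤ k then f k l else 0) = ∑ k ∈ Finset.Icc l n, f k l := by
    intro l hl
    rw [Finset.sum_ite, Finset.sum_const_zero, add_zero]
    apply Finset.sum_congr _ (fun _ _ => rfl)
    ext k
    simp only [Finset.mem_filter, Finset.mem_range, Finset.mem_Icc]
    omega
  rw [Finset.sum_congr rfl h1, Finset.sum_comm, Finset.sum_congr rfl h2]


theorem stmt9 (m : ℕ) (hm : 0 < m) (r : ℕ) (lam : ℝ) (hlam : lam ≠ 0)
    (W : ℕ → ℕ → ℝ)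
    (hW : ∀ (x : ℝ) (N : ℕ),
      dfall lam ((m : ℝ) * x + r) N = ∑ k ∈ Finset.range (N + 1), W N k * (m : ℝ) ^ k * ffall x k)
    (S : ℕ → ℕ → ℝ)
    (hS : ∀ (x : ℝ) (N : ℕ),
      dfall (lam / m) x N = ∑ k ∈ Finset.range (N + 1), S N k * ffall x k)
    (n j : ℕ) (hj : j ≤ n) :
    W n j = ∑ k ∈ Finset.Icc j n, ∑ l ∈ Finset.Icc j k,
      (n.choose k : ℝ) * (k.choose l : ℝ) * dfall lam ((r : ℝ) - 1) (n - k) *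
        dfall lam 1 (k - l) * (m : ℝ) ^ (l - j) * S l j := by
  set c : ℕ → ℝ := fun j' => ∑ k ∈ Finset.Icc j' n, ∑ l ∈ Finset.Icc j' k,
      (n.choose k : ℝ) * (k.choose l : ℝ) * dfall lam ((r : ℝ) - 1) (n - k) *
        dfall lam 1 (k - l) * (m : ℝ) ^ (l - j') * S l j' with hc
  have hm' : (m:ℝ) ≠ 0 := Nat.cast_ne_zero.2 hm.ne'
  have key : ∀ x : ℝ, dfall lam ((m:ℝ)*x + r) n
      = ∑ j' ∈ range (n+1), c j' * (m:ℝ)^j' * ffall x j' := by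
    intro x
    have e0 : (m:ℝ)*x + (r:ℝ) = ((m:ℝ)*x + 1) + ((r:ℝ) - 1) := by ring
    rw [e0, dfall_add]
    have step1 : ∀ k ∈ range (n+1),
        (n.choose k : ℝ) * dfall lam ((m:ℝ)*x + 1) k * dfall lam ((r:ℝ)-1) (n-k)
        = ∑ l ∈ range (k+1), ∑ j' ∈ range (l+1),
            (n.choose k : ℝ) * (k.choose l : ℝ) * dfall lam ((r:ℝ)-1) (n-k) *
              dfall lam 1 (k-l) * (m:ℝ)^l * S l j' * ffall x j' := by
      intro k _
      rw [dfall_add lam ((m:ℝ)*x) 1 k, Finset.mul_sum, Finset.sum_mul]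
      apply Finset.sum_congr rfl
      intro l _
      rw [dfall_scale lam x m hm l, hS x l]
      rw [show (n.choose k : ℝ) * ((k.choose l : ℝ) * ((m:ℝ)^l *
            (∑ j' ∈ range (l+1), S l j' * ffall x j')) * dfall lam 1 (k-l)) *
            dfall lam ((r:ℝ)-1) (n-k)
          = ((n.choose k : ℝ) * (k.choose l : ℝ) * dfall lam ((r:ℝ)-1) (n-k) *
              dfall lam 1 (k-l) * (m:ℝ)^l) *
            (∑ j' ∈ range (l+1), S l j' * ffall x j') from by ring, Finset.mul_sum]
      apply Finset.sum_congr rfl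
      intro j' _
      ring
    rw [Finset.sum_congr rfl step1]
    have step2 : ∀ k ∈ range (n+1),
        (∑ l ∈ range (k+1), ∑ j' ∈ range (l+1),
            (n.choose k : ℝ) * (k.choose l : ℝ) * dfall lam ((r:ℝ)-1) (n-k) *
              dfall lam 1 (k-l) * (m:ℝ)^l * S l j' * ffall x j')
        = ∑ j' ∈ range (k+1), ∑ l ∈ Finset.Icc j' k,
            (n.choose k : ℝ) * (k.choose l : ℝ) * dfall lam ((r:ℝ)-1) (n-k) *
              dfall lam 1 (k-l) * (m:ℝ)^l * S l j' * ffall x j' := by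
      intro k _
      exact tri_swap k (fun l j' => (n.choose k : ℝ) * (k.choose l : ℝ) *
        dfall lam ((r:ℝ)-1) (n-k) * dfall lam 1 (k-l) * (m:ℝ)^l * S l j' * ffall x j')
    rw [Finset.sum_congr rfl step2, tri_swap n]
    apply Finset.sum_congr rfl
    intro j' _
    rw [hc]
    simp only []
    rw [Finset.sum_mul, Finset.sum_mul]
    apply Finset.sum_congr rfl
    intro k hk
    rw [Finset.sum_mul, Finset.sum_mul]
    apply Finset.sum_congr rfl
    intro l hl
    have hjl : j' ≤ l := (Finset.mem_Icc.mp hl).1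
    have hml : (m:ℝ)^(l - j') * (m:ℝ)^j' = (m:ℝ)^l := by
      rw [← pow_add, Nat.sub_add_cancel hjl]
    calc (n.choose k : ℝ) * (k.choose l : ℝ) * dfall lam ((r:ℝ)-1) (n-k) *
          dfall lam 1 (k-l) * (m:ℝ)^l * S l j' * ffall x j'
        = ((n.choose k : ℝ) * (k.choose l : ℝ) * dfall lam ((r:ℝ)-1) (n-k) *
            dfall lam 1 (k-l) * S l j' * ffall x j') * ((m:ℝ)^(l-j') * (m:ℝ)^j') := by
          rw [hml]; ring
      _ = (n.choose k : ℝ) * (k.choose l : ℝ) * dfall lam ((r:ℝ)-1) (n-k) *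
            dfall lam 1 (k-l) * (m:ℝ)^(l-j') * S l j' * (m:ℝ)^j' * ffall x j' := by ring
  have hzero : ∀ x : ℝ,
      ∑ k ∈ range (n+1), ((W n k - c k) * (m:ℝ)^k) * ffall x k = 0 := by
    intro x
    have h1 := hW x n
    have h2 := key x
    have : ∑ k ∈ range (n+1), ((W n k - c k) * (m:ℝ)^k) * ffall x k
        = (∑ k ∈ range (n+1), W n k * (m:ℝ)^k * ffall x k)
          - ∑ k ∈ range (n+1), c k * (m:ℝ)^k * ffall x k := by
      rw [← Finset.sum_sub_distrib]
      apply Finset.sum_congr rfl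
      intro k _
      ring
    rw [this, ← h1, ← h2, sub_self]
  have := coeff_unique n (fun k => (W n k - c k) * (m:ℝ)^k) hzero j hj
  have hmj : (m:ℝ)^j ≠ 0 := pow_ne_zero _ hm'
  have hWc : W n j - c j = 0 := by
    rcases mul_eq_zero.mp this with h | h
    · exact h
    · exact absurd h hmj
  have := sub_eq_zero.mp hWc
  rw [this]
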